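/- Let H be an n-dimensional complex Hilbert space, and let (e_j)_{1≤j≤n} and (f_j)_{1≤j≤n} be two families of pairwise orthogonal rank-one orthogonal projections on H, each summing to the identity. Assume that e_i f_j ≠ 0 whenever i = 1 or j = 1. Then there exist orthonormal bases (ξ_j)_{1≤j≤n} and (η_j)_{1≤j≤n} of H such that (a) e_j ξ_j = ξ_j and f_j η_j = η_j for all j, and (b) the inner product ⟨ξ_j, η_i⟩ is a strictly positive real number whenever i = 1 or j = 1; this pair of bases is unique up to replacing (ξ_j, η_j) by (λξ_j, λη_j) for a single complex number λ with |λ| = 1; moreover the unique unitary operator U on H with Uξ_j = η_j for all j satisfies U e_j U* = f_j for all j. -/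

import Mathlib

noncomputable section

open scoped ComplexInnerProductSpace ComplexConjugate

/-- A complex number is a strictly positive real. -/
def IsPosReal (z : ℂ) : Prop := 0 < z.re ∧ z.im = 0

section Helpers

variable {H : Type} [NormedAddCommGroup H] [InnerProductSpace ℂ H] [FiniteDimensional ℂ H]

lemma aux_norm_div_norm {z : ℂ} (hz : z ≠ 0) : ‖z / (‖z‖ : ℂ)‖ = 1 := by
  rw [norm_div, Complex.norm_real, norm_norm, div_self (norm_ne_zero_iff.mpr hz)]

lemma aux_conj_div_mul {z : ℂ} (hz : z ≠ 0) : conj (z / (‖z‖ : ℂ)) * z = (‖z‖ : ℂ) := by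
  have h2 : conj z * z = (‖z‖ : ℂ) ^ 2 := Complex.conj_mul' z
  have hn : ((‖z‖ : ℝ) : ℂ) ≠ 0 := by
    simpa using norm_ne_zero_iff.mpr hz
  rw [map_div₀, Complex.conj_ofReal, div_mul_eq_mul_div, h2, sq, mul_div_assoc,
    div_self hn, mul_one]

lemma aux_isPosReal_norm {z : ℂ} (hz : z ≠ 0) : IsPosReal ((‖z‖ : ℝ) : ℂ) :=
  ⟨by simpa using norm_pos_iff.mpr hz, by simp⟩

lemma aux_isPosReal_eq_one {z : ℂ} (h : IsPosReal z) (hz : ‖z‖ = 1) : z = 1 := by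
  have hzre : z = (z.re : ℂ) := Complex.ext rfl (by simp [h.2])
  rw [hzre] at hz ⊢
  rw [Complex.norm_real, Real.norm_eq_abs, abs_of_pos h.1] at hz
  rw [hz]; norm_num

lemma aux_phase_eq {a b p q : ℂ} (ha : ‖a‖ = 1) (hb : ‖b‖ = 1) (hp : IsPosReal p)
    (hq : IsPosReal q) (h : q = conj a * b * p) : b = a := by
  set w := conj a * b with hw
  have hw1 : ‖w‖ = 1 := by rw [hw, norm_mul, RCLike.norm_conj, ha, hb]; ring
  have hpre : p.im = 0 := hp.2
  have hqre : q.re = w.re * p.re := by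
    rw [h, Complex.mul_re, hpre]; ring
  have hqim : q.im = w.im * p.re := by
    rw [h, Complex.mul_im, hpre]; ring
  have hwim : w.im = 0 := by
    have := hq.2
    rw [hqim] at this
    exact (mul_eq_zero.mp this).resolve_right (ne_of_gt hp.1)
  have hwre : 0 < w.re := by
    have := hq.1
    rw [hqre] at this
    nlinarith [hp.1]
  have hw1' : w = 1 := aux_isPosReal_eq_one ⟨hwre, hwim⟩ hw1
  have hna : a * conj a = 1 := by
    rw [Complex.mul_conj']
    norm_cast
    rw [ha]; norm_num
  calc b = (a * conj a) * b := by rw [hna, one_mul]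
    _ = a * (conj a * b) := by ring
    _ = a := by rw [← hw, hw1', mul_one]

lemma exists_unit_fixed (e : H →L[ℂ] H) (hI : IsIdempotentElem e)
    (hR : Module.finrank ℂ (LinearMap.range ((e : H →L[ℂ] H) : H →ₗ[ℂ] H)) = 1) :
    ∃ x : H, ‖x‖ = 1 ∧ e x = x := by
  have hne : (LinearMap.range ((e : H →L[ℂ] H) : H →ₗ[ℂ] H)) ≠ ⊥ := by
    intro h; rw [h] at hR; simp at hR
  obtain ⟨v, hv, hv0⟩ := Submodule.exists_mem_ne_zero_of_ne_bot hne
  obtain ⟨w, hw⟩ := hv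
  have hev : e v = v := by
    have : (e * e) w = e w := by rw [hI]
    rw [ContinuousLinearMap.mul_apply] at this
    calc e v = e (e w) := by rw [← hw]; rfl
      _ = e w := this
      _ = v := hw
  refine ⟨((‖v‖ : ℝ) : ℂ)⁻¹ • v, ?_, ?_⟩
  · rw [norm_smul, norm_inv, Complex.norm_real, norm_norm,
      inv_mul_cancel₀ (norm_ne_zero_iff.mpr hv0)]
  · rw [map_smul, hev]

lemma proj_apply (e : H →L[ℂ] H) (hI : IsIdempotentElem e) (hS : IsSelfAdjoint e)
    (hR : Module.finrank ℂ (LinearMap.range ((e : H →L[ℂ] H) : H →ₗ[ℂ] H)) = 1)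
    {x : H} (hx : ‖x‖ = 1) (hex : e x = x) (z : H) :
    e z = ⟪x, z⟫ • x := by
  have hx0 : x ≠ 0 := by intro h; rw [h] at hx; simp at hx
  have hle : (Submodule.span ℂ {x}) ≤ LinearMap.range ((e : H →L[ℂ] H) : H →ₗ[ℂ] H) := by
    rw [Submodule.span_singleton_le_iff_mem]
    exact ⟨x, hex⟩
  have heq := Submodule.eq_of_le_of_finrank_le hle
    (by rw [hR, finrank_span_singleton hx0])
  have hz : e z ∈ Submodule.span ℂ ({x} : Set H) := by
    rw [heq]; exact ⟨z, rfl⟩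
  obtain ⟨c, hc⟩ := Submodule.mem_span_singleton.mp hz
  have h1 : ⟪x, e z⟫ = c := by
    rw [← hc, inner_smul_right, inner_self_eq_norm_sq_to_K, hx]
    norm_num
  have h2 : ⟪x, e z⟫ = ⟪x, z⟫ := by
    conv_lhs => rw [← hS.adjoint_eq]
    rw [ContinuousLinearMap.adjoint_inner_right, hex]
  rw [← hc, ← h1, h2]

lemma family_props {n : ℕ} (e : Fin n → H →L[ℂ] H)
    (heI : ∀ j, IsIdempotentElem (e j)) (heS : ∀ j, IsSelfAdjoint (e j))
    (heR : ∀ j, Module.finrank ℂ (LinearMap.range ((e j : H →L[ℂ] H) : H →ₗ[ℂ] H)) = 1)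
    (heO : ∀ i j, i ≠ j → e i * e j = 0) (heSum : ∑ j, e j = 1)
    (ξ : Fin n → H) (hξ1 : ∀ j, ‖ξ j‖ = 1) (hξe : ∀ j, e j (ξ j) = ξ j) :
    Orthonormal ℂ ξ ∧ Submodule.span ℂ (Set.range ξ) = ⊤ := by
  constructor
  · rw [orthonormal_iff_ite]
    intro i j
    by_cases h : i = j
    · subst h
      simp [inner_self_eq_norm_sq_to_K, hξ1 i]
    · simp only [h, if_false]
      have h0 : e i (ξ j) = 0 := by
        rw [← hξe j, ← ContinuousLinearMap.mul_apply, heO i j h,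
          ContinuousLinearMap.zero_apply]
      calc ⟪ξ i, ξ j⟫ = ⟪e i (ξ i), ξ j⟫ := by rw [hξe]
        _ = ⟪ξ i, e i (ξ j)⟫ := by
            conv_lhs => rw [← (heS i).adjoint_eq]
            rw [ContinuousLinearMap.adjoint_inner_left]
        _ = 0 := by rw [h0, inner_zero_right]
  · rw [Submodule.eq_top_iff']
    intro z
    have hz : z = ∑ j, e j z := by
      rw [← ContinuousLinearMap.sum_apply, heSum, ContinuousLinearMap.one_apply]
    rw [hz]
    exact Submodule.sum_mem _ fun j _ => by
      rw [proj_apply (e j) (heI j) (heS j) (heR j) (hξ1 j) (hξe j)]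
      exact Submodule.smul_mem _ _ (Submodule.subset_span ⟨j, rfl⟩)

lemma inner_ext_span {n : ℕ} {v : Fin n → H} (hsp : Submodule.span ℂ (Set.range v) = ⊤)
    {a b : H} (h : ∀ j, ⟪v j, a⟫ = ⟪v j, b⟫) : a = b := by
  have hmem : (a - b) ∈ (Submodule.span ℂ (Set.range v))ᗮ := by
    rw [Submodule.mem_orthogonal]
    intro u hu
    induction hu using Submodule.span_induction with
    | mem u hu =>
        obtain ⟨j, rfl⟩ := hu
        rw [inner_sub_right, h j, sub_self]
    | zero => rw [inner_zero_left]
    | add u w _ _ hu hw => rw [inner_add_left, hu, hw, add_zero]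
    | smul c u _ hu => rw [inner_smul_left, hu, mul_zero]
  rw [hsp, Submodule.top_orthogonal_eq_bot, Submodule.mem_bot, sub_eq_zero] at hmem
  exact hmem

end Helpers

theorem stmt0 {n : ℕ} (hn : 0 < n) {H : Type} [NormedAddCommGroup H]
    [InnerProductSpace ℂ H] [FiniteDimensional ℂ H]
    (hdim : Module.finrank ℂ H = n)
    (e f : Fin n → H →L[ℂ] H)
    (heI : ∀ j, IsIdempotentElem (e j)) (heS : ∀ j, IsSelfAdjoint (e j))
    (heR : ∀ j, Module.finrank ℂ (LinearMap.range ((e j : H →L[ℂ] H) : H →ₗ[ℂ] H)) = 1)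
    (heO : ∀ i j, i ≠ j → e i * e j = 0) (heSum : ∑ j, e j = 1)
    (hfI : ∀ j, IsIdempotentElem (f j)) (hfS : ∀ j, IsSelfAdjoint (f j))
    (hfR : ∀ j, Module.finrank ℂ (LinearMap.range ((f j : H →L[ℂ] H) : H →ₗ[ℂ] H)) = 1)
    (hfO : ∀ i j, i ≠ j → f i * f j = 0) (hfSum : ∑ j, f j = 1)
    (hgen : ∀ i j : Fin n, (i = ⟨0, hn⟩ ∨ j = ⟨0, hn⟩) → e i * f j ≠ 0) :
    ∃ ξ η : Fin n → H,
      (Orthonormal ℂ ξ ∧ Submodule.span ℂ (Set.range ξ) = ⊤) ∧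
      (Orthonormal ℂ η ∧ Submodule.span ℂ (Set.range η) = ⊤) ∧
      (∀ j, e j (ξ j) = ξ j) ∧ (∀ j, f j (η j) = η j) ∧
      (∀ i j : Fin n, (i = ⟨0, hn⟩ ∨ j = ⟨0, hn⟩) → IsPosReal ⟪ξ j, η i⟫) ∧
      (∀ ξ' η' : Fin n → H,
        Orthonormal ℂ ξ' → Submodule.span ℂ (Set.range ξ') = ⊤ →
        Orthonormal ℂ η' → Submodule.span ℂ (Set.range η') = ⊤ →
        (∀ j, e j (ξ' j) = ξ' j) → (∀ j, f j (η' j) = η' j) →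
        (∀ i j : Fin n, (i = ⟨0, hn⟩ ∨ j = ⟨0, hn⟩) → IsPosReal ⟪ξ' j, η' i⟫) →
        ∃ lam : ℂ, ‖lam‖ = 1 ∧ (∀ j, ξ' j = lam • ξ j) ∧ (∀ j, η' j = lam • η j)) ∧
      (∃! U : H →L[ℂ] H, ∀ j, U (ξ j) = η j) ∧
      (∀ U : H →L[ℂ] H, (∀ j, U (ξ j) = η j) →
        (ContinuousLinearMap.adjoint U ∘L U = 1 ∧ U ∘L ContinuousLinearMap.adjoint U = 1 ∧
          ∀ j, U ∘L e j ∘L ContinuousLinearMap.adjoint U = f j)) := by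
  classical
  choose x hx1 hxe using fun j => exists_unit_fixed (e j) (heI j) (heR j)
  choose y hy1 hye using fun j => exists_unit_fixed (f j) (hfI j) (hfR j)
  set i0 : Fin n := ⟨0, hn⟩ with hi0
  have hef : ∀ i j, (i = i0 ∨ j = i0) → ⟪x i, y j⟫ ≠ 0 := by
    intro i j hij hzero
    apply hgen i j hij
    ext z
    rw [ContinuousLinearMap.mul_apply,
      proj_apply (f j) (hfI j) (hfS j) (hfR j) (hy1 j) (hye j) z,
      map_smul, proj_apply (e i) (heI i) (heS i) (heR i) (hx1 i) (hxe i) (y j),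
      hzero]
    simp
  have hscal1 : ∀ z : ℂ, z ≠ 0 → ‖conj z / ((‖z‖ : ℝ) : ℂ)‖ = 1 := by
    intro z hz
    rw [show ((‖z‖ : ℝ) : ℂ) = ((‖conj z‖ : ℝ) : ℂ) by rw [RCLike.norm_conj]]
    exact aux_norm_div_norm (by simpa using hz)
  have hscal2 : ∀ z : ℂ, z ≠ 0 → (conj z / ((‖z‖ : ℝ) : ℂ)) * z = ((‖z‖ : ℝ) : ℂ) := by
    intro z hz
    have h := aux_conj_div_mul hz
    rwa [map_div₀, Complex.conj_ofReal] at h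
  have hu0 : ∀ i, ⟪x i0, y i⟫ ≠ 0 := fun i => hef i0 i (Or.inl rfl)
  set η : Fin n → H := fun i => (conj ⟪x i0, y i⟫ / ((‖⟪x i0, y i⟫‖ : ℝ) : ℂ)) • y i
    with hηdef
  have hη1 : ∀ i, ‖η i‖ = 1 := by
    intro i
    simp only [hηdef]
    rw [norm_smul, hscal1 _ (hu0 i), hy1, one_mul]
  have hηf : ∀ i, f i (η i) = η i := by
    intro i
    simp only [hηdef]
    rw [map_smul, hye]
  have hx0η : ∀ i, ⟪x i0, η i⟫ = ((‖⟪x i0, y i⟫‖ : ℝ) : ℂ) := by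
    intro i
    simp only [hηdef]
    rw [inner_smul_right]
    exact hscal2 _ (hu0 i)
  have hv0 : ∀ j, ⟪x j, η i0⟫ ≠ 0 := by
    intro j
    simp only [hηdef]
    rw [inner_smul_right]
    apply mul_ne_zero
    · apply div_ne_zero
      · simp only [ne_eq, map_eq_zero]; exact hu0 i0
      · simpa using norm_ne_zero_iff.mpr (hu0 i0)
    · exact hef j i0 (Or.inr rfl)
  set ξ : Fin n → H := fun j => (⟪x j, η i0⟫ / ((‖⟪x j, η i0⟫‖ : ℝ) : ℂ)) • x j with hξdef
  have hξ1 : ∀ j, ‖ξ j‖ = 1 := by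
    intro j
    simp only [hξdef]
    rw [norm_smul, aux_norm_div_norm (hv0 j), hx1, one_mul]
  have hξf : ∀ j, e j (ξ j) = ξ j := by
    intro j
    simp only [hξdef]
    rw [map_smul, hxe]
  have hξη0 : ∀ j, ⟪ξ j, η i0⟫ = ((‖⟪x j, η i0⟫‖ : ℝ) : ℂ) := by
    intro j
    conv_lhs => rw [hξdef]
    rw [inner_smul_left, aux_conj_div_mul (hv0 j)]
  have hξ0 : ξ i0 = x i0 := by
    have hv00 : ⟪x i0, η i0⟫ = ((‖⟪x i0, y i0⟫‖ : ℝ) : ℂ) := hx0η i0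
    simp only [hξdef, hv00]
    rw [Complex.norm_real, Real.norm_eq_abs, abs_of_nonneg (norm_nonneg _),
      div_self (by exact_mod_cast norm_ne_zero_iff.mpr (hu0 i0)), one_smul]
  have hξ0η : ∀ i, ⟪ξ i0, η i⟫ = ((‖⟪x i0, y i⟫‖ : ℝ) : ℂ) := by
    intro i; rw [hξ0]; exact hx0η i
  have hpos : ∀ i j : Fin n, (i = i0 ∨ j = i0) → IsPosReal ⟪ξ j, η i⟫ := by
    intro i j hij
    rcases hij with rfl | rfl
    · rw [hξη0 j]; exact aux_isPosReal_norm (hv0 j)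
    · rw [hξ0η i]; exact aux_isPosReal_norm (hu0 i)
  obtain ⟨hONξ, hspξ⟩ := family_props e heI heS heR heO heSum ξ hξ1 hξf
  obtain ⟨hONη, hspη⟩ := family_props f hfI hfS hfR hfO hfSum η hη1 hηf
  have hEξ : ∀ j z, e j z = ⟪ξ j, z⟫ • ξ j := fun j z =>
    proj_apply (e j) (heI j) (heS j) (heR j) (hξ1 j) (hξf j) z
  have hFη : ∀ j z, f j z = ⟪η j, z⟫ • η j := fun j z =>
    proj_apply (f j) (hfI j) (hfS j) (hfR j) (hη1 j) (hηf j) z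
  refine ⟨ξ, η, ⟨hONξ, hspξ⟩, ⟨hONη, hspη⟩, hξf, hηf, hpos, ?_, ?_, ?_⟩
  · -- uniqueness up to phase
    intro ξ' η' hONξ' hspξ' hONη' hspη' hξ'f hη'f hpos'
    have hαdef : ∀ j, ξ' j = ⟪ξ j, ξ' j⟫ • ξ j := fun j => by
      conv_lhs => rw [← hξ'f j]
      exact hEξ j (ξ' j)
    have hβdef : ∀ i, η' i = ⟪η i, η' i⟫ • η i := fun i => by
      conv_lhs => rw [← hη'f i]
      exact hFη i (η' i)
    have hα1 : ∀ j, ‖(⟪ξ j, ξ' j⟫ : ℂ)‖ = 1 := fun j => by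
      have h1 : ‖ξ' j‖ = 1 := hONξ'.1 j
      rw [hαdef j, norm_smul, hξ1 j, mul_one] at h1
      exact h1
    have hβ1 : ∀ i, ‖(⟪η i, η' i⟫ : ℂ)‖ = 1 := fun i => by
      have h1 : ‖η' i‖ = 1 := hONη'.1 i
      rw [hβdef i, norm_smul, hη1 i, mul_one] at h1
      exact h1
    have hinner : ∀ i j, ⟪ξ' j, η' i⟫ = conj ⟪ξ j, ξ' j⟫ * ⟪η i, η' i⟫ * ⟪ξ j, η i⟫ := by
      intro i j
      conv_lhs => rw [hαdef j, hβdef i]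
      rw [inner_smul_left, inner_smul_right]
      ring
    have h1 : ∀ j, ⟪η i0, η' i0⟫ = ⟪ξ j, ξ' j⟫ := fun j =>
      aux_phase_eq (hα1 j) (hβ1 i0) (hpos i0 j (Or.inl rfl)) (hpos' i0 j (Or.inl rfl))
        (hinner i0 j)
    have h2 : ∀ i, ⟪η i, η' i⟫ = ⟪ξ i0, ξ' i0⟫ := fun i =>
      aux_phase_eq (hα1 i0) (hβ1 i) (hpos i i0 (Or.inr rfl)) (hpos' i i0 (Or.inr rfl))
        (hinner i i0)
    refine ⟨⟪η i0, η' i0⟫, hβ1 i0, fun j => by rw [hαdef j, ← h1 j],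
      fun i => by rw [hβdef i, h2 i, ← h1 i0]⟩
  · -- existence and uniqueness of U
    have hli := hONξ.linearIndependent
    refine ⟨LinearMap.toContinuousLinearMap
      (((Module.Basis.mk hli (by rw [hspξ])).constr ℂ) η), fun j => ?_, fun V hV => ?_⟩
    · show (((Module.Basis.mk hli (by rw [hspξ])).constr ℂ) η) (ξ j) = η j
      conv_lhs => rw [show ξ j = (Module.Basis.mk hli (by rw [hspξ])) j from
        (Module.Basis.mk_apply hli _ j).symm]
      rw [Module.Basis.constr_basis]
    · apply ContinuousLinearMap.coe_injective
      apply LinearMap.ext_on_range hspξ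
      intro j
      simp only [ContinuousLinearMap.coe_coe]
      rw [hV j]
      show η j = (((Module.Basis.mk hli (by rw [hspξ])).constr ℂ) η) (ξ j)
      conv_rhs => rw [show ξ j = (Module.Basis.mk hli (by rw [hspξ])) j from
        (Module.Basis.mk_apply hli _ j).symm]
      rw [Module.Basis.constr_basis]
  · -- unitarity
    intro U hU
    have hUadj : ∀ j, ContinuousLinearMap.adjoint U (η j) = ξ j := by
      intro j
      apply inner_ext_span hspξ
      intro i
      rw [ContinuousLinearMap.adjoint_inner_right, hU i,
        orthonormal_iff_ite.mp hONη i j, orthonormal_iff_ite.mp hONξ i j]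
    refine ⟨?_, ?_, ?_⟩
    · apply ContinuousLinearMap.coe_injective
      apply LinearMap.ext_on_range hspξ
      intro j
      simp only [ContinuousLinearMap.coe_coe]
      rw [ContinuousLinearMap.comp_apply, hU j, hUadj j, ContinuousLinearMap.one_apply]
    · apply ContinuousLinearMap.coe_injective
      apply LinearMap.ext_on_range hspη
      intro j
      simp only [ContinuousLinearMap.coe_coe]
      rw [ContinuousLinearMap.comp_apply, hUadj j, hU j, ContinuousLinearMap.one_apply]
    · intro j
      apply ContinuousLinearMap.coe_injective
      apply LinearMap.ext_on_range hspη
      intro i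
      simp only [ContinuousLinearMap.coe_coe]
      rw [ContinuousLinearMap.comp_apply, ContinuousLinearMap.comp_apply, hUadj i,
        hEξ j (ξ i), map_smul, hU j, hFη j (η i)]
      congr 1
      rw [orthonormal_iff_ite.mp hONξ j i, orthonormal_iff_ite.mp hONη j i]
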